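/- (Bound on mid-time density values.) For every j ∈ ℤ, the mid-time values satisfy |ρ^{½,−}_{j+1/2}| ≤ (1 + θ)·(1 + λ·L)·ρ_j and |ρ^{½,+}_{j−1/2}| ≤ (1 + θ)·(1 + λ·L)·ρ_j. -/

import Mathlib

open MeasureTheory

noncomputable section

/-- minmod limiter of three arguments. -/
def minmod3 (a b c : ℝ) : ℝ :=
  if 0 < a ∧ 0 < b ∧ 0 < c then min a (min b c)
  else if a < 0 ∧ b < 0 ∧ c < 0 then max a (max b c)
  else 0

/-- MUSCL slopes `σ_j = 2θ·minmod(ρ_j − ρ_{j−1}, (ρ_{j+1} − ρ_{j−1})/2, ρ_{j+1} − ρ_j)`. -/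
def slp (θ : ℝ) (ρ : ℤ → ℝ) (j : ℤ) : ℝ :=
  2 * θ * minmod3 (ρ j - ρ (j - 1)) ((ρ (j + 1) - ρ (j - 1)) / 2) (ρ (j + 1) - ρ j)

/-- left interface value `ρ⁻_{j+1/2} = ρ_j + σ_j/2`. -/
def intL (θ : ℝ) (ρ : ℤ → ℝ) (j : ℤ) : ℝ := ρ j + slp θ ρ j / 2

/-- right interface value `ρ⁺_{j−1/2} = ρ_j − σ_j/2`. -/
def intR (θ : ℝ) (ρ : ℤ → ℝ) (j : ℤ) : ℝ := ρ j - slp θ ρ j / 2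

/-- discrete convolution `A_j = Δx·Σ_l μ((j−l)Δx)·ρ_l`. -/
def Adisc (μ : ℝ → ℝ) (Δx : ℝ) (ρ : ℤ → ℝ) (j : ℤ) : ℝ :=
  Δx * ∑' l : ℤ, μ (((j : ℝ) - (l : ℝ)) * Δx) * ρ l

/-- `s_j = θ·(A_{j+1} − A_{j−1})`. -/
def sdisc (μ : ℝ → ℝ) (θ Δx : ℝ) (ρ : ℤ → ℝ) (j : ℤ) : ℝ :=
  θ * (Adisc μ Δx ρ (j + 1) - Adisc μ Δx ρ (j - 1))

/-- `A⁻_{j+1/2} = A_j + s_j/2`. -/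
def AdiscL (μ : ℝ → ℝ) (θ Δx : ℝ) (ρ : ℤ → ℝ) (j : ℤ) : ℝ :=
  Adisc μ Δx ρ j + sdisc μ θ Δx ρ j / 2

/-- `A⁺_{j−1/2} = A_j − s_j/2`. -/
def AdiscR (μ : ℝ → ℝ) (θ Δx : ℝ) (ρ : ℤ → ℝ) (j : ℤ) : ℝ :=
  Adisc μ Δx ρ j - sdisc μ θ Δx ρ j / 2

/-- mid-time value `ρ^{½,−}_{j+1/2}`. -/
def midL (f : ℝ → ℝ → ℝ) (μ : ℝ → ℝ) (θ lam Δx : ℝ) (ρ : ℤ → ℝ) (j : ℤ) : ℝ :=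
  intL θ ρ j - lam / 2 *
    (f (intL θ ρ j) (AdiscL μ θ Δx ρ j) - f (intR θ ρ j) (AdiscR μ θ Δx ρ j))

/-- mid-time value `ρ^{½,+}_{j−1/2}`. -/
def midR (f : ℝ → ℝ → ℝ) (μ : ℝ → ℝ) (θ lam Δx : ℝ) (ρ : ℤ → ℝ) (j : ℤ) : ℝ :=
  intR θ ρ j - lam / 2 *
    (f (intL θ ρ j) (AdiscL μ θ Δx ρ j) - f (intR θ ρ j) (AdiscR μ θ Δx ρ j))

/-- mid-time convolution `A^{½}_{j+1/2}`. -/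
def Amid (f : ℝ → ℝ → ℝ) (μ : ℝ → ℝ) (θ lam Δx : ℝ) (ρ : ℤ → ℝ) (j : ℤ) : ℝ :=
  Δx / 2 * ∑' l : ℤ,
    (μ (((j : ℝ) + 1 - (l : ℝ)) * Δx) * midR f μ θ lam Δx ρ l +
     μ (((j : ℝ) - (l : ℝ)) * Δx) * midL f μ θ lam Δx ρ l)

/-- Lax–Friedrichs type numerical flux `F(u,v,A)`. -/
def numFlux (f : ℝ → ℝ → ℝ) (α lam u v A : ℝ) : ℝ :=
  (f u A + f v A) / 2 - α * (v - u) / (2 * lam)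

/-- MUSCL–Hancock update `ρ'_j`. -/
def mhUpdate (f : ℝ → ℝ → ℝ) (μ : ℝ → ℝ) (θ α lam Δx : ℝ) (ρ : ℤ → ℝ) (j : ℤ) : ℝ :=
  ρ j - lam *
    (numFlux f α lam (midL f μ θ lam Δx ρ j) (midR f μ θ lam Δx ρ (j + 1))
        (Amid f μ θ lam Δx ρ j) -
     numFlux f α lam (midL f μ θ lam Δx ρ (j - 1)) (midR f μ θ lam Δx ρ j)
        (Amid f μ θ lam Δx ρ (j - 1)))

lemma minmod3_abs_le (rm r rp b : ℝ) (hm : 0 ≤ rm) (h : 0 ≤ r) (hp : 0 ≤ rp) :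
    |minmod3 (r - rm) b (rp - r)| ≤ r := by
  unfold minmod3
  split_ifs with h1 h2
  · rw [abs_of_pos (lt_min h1.1 (lt_min h1.2.1 h1.2.2))]
    have := min_le_left (r - rm) (min b (rp - r))
    linarith
  · rw [abs_of_neg (max_lt h2.1 (max_lt h2.2.1 h2.2.2))]
    have h3 : rp - r ≤ max b (rp - r) := le_max_right _ _
    have h4 : max b (rp - r) ≤ max (r - rm) (max b (rp - r)) := le_max_right _ _
    linarith
  · simpa using h

lemma f_abs_le (f : ℝ → ℝ → ℝ) (L : ℝ) (hf : ContDiff ℝ 2 (Function.uncurry f))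
    (hf0 : ∀ A : ℝ, f 0 A = 0) (hL : ∀ r A : ℝ, |deriv (fun x => f x A) r| ≤ L)
    (u A : ℝ) : |f u A| ≤ L * |u| := by
  have hd : Differentiable ℝ (fun x => f x A) := by
    have := (hf.differentiable (by norm_num)).comp
      ((differentiable_id (𝕜 := ℝ) (E := ℝ)).prodMk (differentiable_const A))
    exact this
  have key := Convex.norm_image_sub_le_of_norm_deriv_le
    (f := fun x => f x A) (s := Set.univ) (C := L)
    (fun x _ => hd x) (fun x _ => hL x A) convex_univ (Set.mem_univ 0) (Set.mem_univ u)
  simpa [hf0 A] using key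

/-- bound on the mid-time density values. -/
theorem stmt3 (f : ℝ → ℝ → ℝ) (μ : ℝ → ℝ) (Δx Δt lam θ α L : ℝ)
    (hΔx : 0 < Δx) (hΔt : 0 < Δt) (hlam : lam = Δt / Δx)
    (hθ0 : 0 ≤ θ) (hθ1 : θ ≤ 1 / 2) (hα0 : 0 < α) (hα1 : α < 8 / 27)
    (hf : ContDiff ℝ 2 (Function.uncurry f)) (hf0 : ∀ A : ℝ, f 0 A = 0)
    (hL : ∀ r A : ℝ, |deriv (fun x => f x A) r| ≤ L)
    (hμ : ContDiff ℝ 2 μ) (hμc : HasCompactSupport μ)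
    (ρ : ℤ → ℝ) (hρ : ∀ j : ℤ, 0 ≤ ρ j) (hsum : Summable ρ) (j : ℤ) :
    |midL f μ θ lam Δx ρ j| ≤ (1 + θ) * (1 + lam * L) * ρ j ∧
    |midR f μ θ lam Δx ρ j| ≤ (1 + θ) * (1 + lam * L) * ρ j := by
  have hlam0 : 0 ≤ lam := by rw [hlam]; positivity
  have hL0 : 0 ≤ L := le_trans (abs_nonneg _) (hL 0 0)
  set m := minmod3 (ρ j - ρ (j - 1)) ((ρ (j + 1) - ρ (j - 1)) / 2) (ρ (j + 1) - ρ j) with hmdef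
  have hm : |m| ≤ ρ j :=
    minmod3_abs_le (ρ (j - 1)) (ρ j) (ρ (j + 1)) _ (hρ _) (hρ _) (hρ _)
  have habs := abs_le.mp hm
  have hθ1' : θ ≤ 1 := by linarith
  have hslp : slp θ ρ j / 2 = θ * m := by
    simp only [slp, hmdef]; ring
  have hiL : intL θ ρ j = ρ j + θ * m := by rw [intL, hslp]
  have hiR : intR θ ρ j = ρ j - θ * m := by rw [intR, hslp]
  have hθm : |θ * m| ≤ θ * ρ j := by
    rw [abs_mul, abs_of_nonneg hθ0]
    exact mul_le_mul_of_nonneg_left hm hθ0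
  have hθm' := abs_le.mp hθm
  have hiL0 : 0 ≤ intL θ ρ j := by
    rw [hiL]; nlinarith [hρ j]
  have hiR0 : 0 ≤ intR θ ρ j := by
    rw [hiR]; nlinarith [hρ j]
  have hiLb : intL θ ρ j ≤ (1 + θ) * ρ j := by rw [hiL]; nlinarith
  have hiRb : intR θ ρ j ≤ (1 + θ) * ρ j := by rw [hiR]; nlinarith
  have hfL := f_abs_le f L hf hf0 hL (intL θ ρ j) (AdiscL μ θ Δx ρ j)
  have hfR := f_abs_le f L hf hf0 hL (intR θ ρ j) (AdiscR μ θ Δx ρ j)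
  rw [abs_of_nonneg hiL0] at hfL
  rw [abs_of_nonneg hiR0] at hfR
  have hsumLR : intL θ ρ j + intR θ ρ j = 2 * ρ j := by rw [hiL, hiR]; ring
  have hfLabs := abs_le.mp hfL
  have hfRabs := abs_le.mp hfR
  set a := f (intL θ ρ j) (AdiscL μ θ Δx ρ j) with ha
  set b := f (intR θ ρ j) (AdiscR μ θ Δx ρ j) with hb
  have hlam2 : (0:ℝ) ≤ lam / 2 := by linarith
  have hab : |a - b| ≤ L * intL θ ρ j + L * intR θ ρ j :=
    le_trans (abs_sub a b) (add_le_add hfL hfR)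
  have habL : lam / 2 * |a - b| ≤ lam * L * ρ j := by
    have h1 : lam / 2 * |a - b| ≤ lam / 2 * (L * intL θ ρ j + L * intR θ ρ j) :=
      mul_le_mul_of_nonneg_left hab hlam2
    have h2 : lam / 2 * (L * intL θ ρ j + L * intR θ ρ j) = lam * L * ρ j := by
      linear_combination (lam * L / 2) * hsumLR
    linarith
  have hθfin : lam * L * ρ j ≤ (1 + θ) * (lam * L * ρ j) := by
    nlinarith [mul_nonneg hθ0 (mul_nonneg (mul_nonneg hlam0 hL0) (hρ j))]
  constructor
  · rw [midL]
    calc |intL θ ρ j - lam / 2 * (a - b)|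
        ≤ |intL θ ρ j| + |lam / 2 * (a - b)| := abs_sub _ _
      _ = intL θ ρ j + lam / 2 * |a - b| := by
          rw [abs_of_nonneg hiL0, abs_mul, abs_of_nonneg hlam2]
      _ ≤ (1 + θ) * ρ j + (1 + θ) * (lam * L * ρ j) := by
          exact add_le_add hiLb (le_trans habL hθfin)
      _ = (1 + θ) * (1 + lam * L) * ρ j := by ring
  · rw [midR]
    calc |intR θ ρ j - lam / 2 * (a - b)|
        ≤ |intR θ ρ j| + |lam / 2 * (a - b)| := abs_sub _ _
      _ = intR θ ρ j + lam / 2 * |a - b| := by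
          rw [abs_of_nonneg hiR0, abs_mul, abs_of_nonneg hlam2]
      _ ≤ (1 + θ) * ρ j + (1 + θ) * (lam * L * ρ j) := by
          exact add_le_add hiRb (le_trans habL hθfin)
      _ = (1 + θ) * (1 + lam * L) * ρ j := by ring
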